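/- (Core estimate of Theorem 1.) Let x : ℝ → ℝ^N be a differentiable curve and e : ℝ → ℝ^m a continuous curve satisfying x'(t) = A x(t) + B e(t) for all t, where A is an N×N real matrix and B a nonzero N×m real matrix. Suppose P and Q are symmetric positive definite N×N real matrices satisfying Aᵀ P + P A = −Q, and let λ_min(Q) > 0 be the smallest eigenvalue of Q. Fix σ ∈ (0,1) and suppose the measurement error satisfies, at a time t, the event-triggering bound ‖e(t)‖² ≤ σ · (λ_min(Q)² / (4 ‖Bᵀ Pᵀ P B‖)) · ‖x(t)‖². Then d/dt ( x(t)ᵀ P x(t) ) ≤ −(1 − σ) (λ_min(Q)/2) ‖x(t)‖² ≤ 0 at that time t. -/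
import Mathlib


open Matrix
open scoped RealInnerProductSpace

/-- Multiplication of a vector in Euclidean space by a real matrix. -/
noncomputable def matVec {a b : ℕ} (M : Matrix (Fin a) (Fin b) ℝ)
    (v : EuclideanSpace ℝ (Fin b)) : EuclideanSpace ℝ (Fin a) :=
  Matrix.toEuclideanLin M v

/-- The operator norm of a real matrix, induced by the Euclidean norms. -/
noncomputable def opNorm {a b : ℕ} (M : Matrix (Fin a) (Fin b) ℝ) : ℝ :=
  ‖LinearMap.toContinuousLinearMap (Matrix.toEuclideanLin M)‖

lemma matVec_mul {a b c : ℕ} (M : Matrix (Fin a) (Fin b) ℝ) (N : Matrix (Fin b) (Fin c) ℝ)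
    (v : EuclideanSpace ℝ (Fin c)) : matVec (M * N) v = matVec M (matVec N v) := by
  simp [matVec, Matrix.toEuclideanLin_apply, Matrix.mulVec_mulVec]

lemma matVec_add_mat {a b : ℕ} (M N : Matrix (Fin a) (Fin b) ℝ) (v : EuclideanSpace ℝ (Fin b)) :
    matVec (M + N) v = matVec M v + matVec N v := by
  simp [matVec]

lemma matVec_neg_mat {a b : ℕ} (M : Matrix (Fin a) (Fin b) ℝ) (v : EuclideanSpace ℝ (Fin b)) :
    matVec (-M) v = -matVec M v := by
  simp [matVec]

lemma transpose_eq_conjTranspose {a b : ℕ} (M : Matrix (Fin a) (Fin b) ℝ) : Mᵀ = Mᴴ := by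
  ext i j; simp [Matrix.conjTranspose_apply]

lemma inner_matVec_transpose {a b : ℕ} (M : Matrix (Fin a) (Fin b) ℝ)
    (v : EuclideanSpace ℝ (Fin a)) (w : EuclideanSpace ℝ (Fin b)) :
    ⟪matVec Mᵀ v, w⟫ = ⟪v, matVec M w⟫ := by
  rw [matVec, matVec, transpose_eq_conjTranspose, Matrix.toEuclideanLin_conjTranspose_eq_adjoint]
  exact LinearMap.adjoint_inner_left _ _ _

lemma norm_matVec_le {a b : ℕ} (M : Matrix (Fin a) (Fin b) ℝ) (v : EuclideanSpace ℝ (Fin b)) :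
    ‖matVec M v‖ ≤ opNorm M * ‖v‖ :=
  (LinearMap.toContinuousLinearMap (Matrix.toEuclideanLin M)).le_opNorm v

lemma norm_sq_matVec {a b : ℕ} (M : Matrix (Fin a) (Fin b) ℝ) (v : EuclideanSpace ℝ (Fin b)) :
    ‖matVec M v‖ ^ 2 = ⟪matVec (Mᵀ * M) v, v⟫ := by
  rw [matVec_mul, inner_matVec_transpose]
  exact (real_inner_self_eq_norm_sq _).symm

lemma matVec_eigen {n : ℕ} {Q : Matrix (Fin n) (Fin n) ℝ} (hQ : Q.IsHermitian) (j : Fin n) :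
    matVec Q (hQ.eigenvectorBasis j) = hQ.eigenvalues j • hQ.eigenvectorBasis j := by
  have h := hQ.mulVec_eigenvectorBasis j
  apply (WithLp.equiv 2 _).injective
  ext i
  simpa [matVec, Matrix.toEuclideanLin_apply] using congrFun h i

lemma inner_matVec_ge {n : ℕ} {Q : Matrix (Fin n) (Fin n) ℝ} (hQ : Q.PosDef) {lamQ : ℝ}
    (hlamQ : IsLeast (Set.range hQ.1.eigenvalues) lamQ) (v : EuclideanSpace ℝ (Fin n)) :
    lamQ * ‖v‖ ^ 2 ≤ ⟪v, matVec Q v⟫ := by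
  set b := hQ.1.eigenvectorBasis
  have h1 : ⟪v, matVec Q v⟫ = ∑ i, hQ.1.eigenvalues i * ⟪v, b i⟫ ^ 2 := by
    rw [← b.sum_inner_mul_inner v (matVec Q v)]
    refine Finset.sum_congr rfl fun i _ => ?_
    have : ⟪b i, matVec Q v⟫ = hQ.1.eigenvalues i * ⟪b i, v⟫ := by
      calc ⟪b i, matVec Q v⟫ = ⟪matVec Qᵀ (b i), v⟫ := (inner_matVec_transpose Q (b i) v).symm
        _ = ⟪matVec Q (b i), v⟫ := by rw [transpose_eq_conjTranspose, hQ.1.eq]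
        _ = hQ.1.eigenvalues i * ⟪b i, v⟫ := by
            rw [matVec_eigen hQ.1 i, real_inner_smul_left]
    rw [this, real_inner_comm (b i) v]; ring
  have h2 : (‖v‖ : ℝ) ^ 2 = ∑ i, ⟪v, b i⟫ ^ 2 := by
    rw [← real_inner_self_eq_norm_sq, ← b.sum_inner_mul_inner v v]
    refine Finset.sum_congr rfl fun i _ => ?_
    rw [real_inner_comm (b i) v]; ring
  rw [h1, h2, Finset.mul_sum]
  refine Finset.sum_le_sum fun i _ => ?_
  have := hlamQ.2 ⟨i, rfl⟩
  nlinarith [sq_nonneg (⟪v, b i⟫ : ℝ)]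


set_option maxHeartbeats 1000000 in
/-- Core estimate of Theorem 1: under the event-triggering bound
`‖e(t)‖² ≤ σ (λ_min(Q)²/(4‖BᵀPᵀPB‖)) ‖x(t)‖²` with `σ ∈ (0,1)`, the Lyapunov derivative
satisfies `d/dt (xᵀ P x) ≤ -(1-σ)(λ_min(Q)/2)‖x‖² ≤ 0`. -/
theorem event_triggered_lyapunov_decrease {N m : ℕ}
    (A P Q : Matrix (Fin N) (Fin N) ℝ) (B : Matrix (Fin N) (Fin m) ℝ)
    (hB : B ≠ 0)
    (hP : P.PosDef) (hQ : Q.PosDef)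
    (hLyap : Aᵀ * P + P * A = -Q)
    (lamQ : ℝ) (hlamQ : IsLeast (Set.range hQ.1.eigenvalues) lamQ) (hlamQpos : 0 < lamQ)
    (σ : ℝ) (hσ : σ ∈ Set.Ioo (0 : ℝ) 1)
    (x : ℝ → EuclideanSpace ℝ (Fin N)) (e : ℝ → EuclideanSpace ℝ (Fin m))
    (he : Continuous e)
    (hx : ∀ s, HasDerivAt x (matVec A (x s) + matVec B (e s)) s)
    (t : ℝ)
    (htrig : ‖e t‖ ^ 2 ≤ σ * (lamQ ^ 2 / (4 * opNorm (Bᵀ * Pᵀ * P * B))) * ‖x t‖ ^ 2) :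
    deriv (fun s => ⟪x s, matVec P (x s)⟫) t ≤ -(1 - σ) * (lamQ / 2) * ‖x t‖ ^ 2 ∧
      -(1 - σ) * (lamQ / 2) * ‖x t‖ ^ 2 ≤ 0 := by
  obtain ⟨hσ0, hσ1⟩ := hσ
  set xt := x t with hxt
  set et := e t with het
  set v := matVec A xt + matVec B et with hv
  set K := opNorm (Bᵀ * Pᵀ * P * B) with hK
  set w := matVec P (matVec B et) with hw
  have hmm' : (P * B)ᵀ * (P * B) = Bᵀ * Pᵀ * P * B := by
    simp [Matrix.transpose_mul, Matrix.mul_assoc]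
  -- transpose of P is P
  have hPt : Pᵀ = P := by rw [transpose_eq_conjTranspose]; exact hP.1.eq
  -- the derivative
  have hPx : HasDerivAt (fun s => matVec P (x s)) (matVec P v) t :=
    (LinearMap.toContinuousLinearMap (Matrix.toEuclideanLin P)).hasFDerivAt.comp_hasDerivAt
      t (hx t)
  have hD : deriv (fun s => ⟪x s, matVec P (x s)⟫) t = ⟪xt, matVec P v⟫ + ⟪v, matVec P xt⟫ :=
    (HasDerivAt.inner ℝ (hx t) hPx).deriv
  -- symmetry of P
  have hsym : ∀ u u' : EuclideanSpace ℝ (Fin N), ⟪u, matVec P u'⟫ = ⟪matVec P u, u'⟫ := by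
    intro u u'
    rw [← inner_matVec_transpose P u u', hPt]
  -- algebraic identity
  have hAlg : ⟪xt, matVec P v⟫ + ⟪v, matVec P xt⟫ = -⟪xt, matVec Q xt⟫ + 2 * ⟪xt, w⟫ := by
    have hPv : matVec P v = matVec P (matVec A xt) + matVec P (matVec B et) := by
      rw [hv]; simp [matVec]
    have e1 : ⟪matVec A xt, matVec P xt⟫ = ⟪xt, matVec (Aᵀ * P) xt⟫ := by
      rw [matVec_mul]
      calc ⟪matVec A xt, matVec P xt⟫ = ⟪matVec P xt, matVec A xt⟫ := real_inner_comm _ _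
        _ = ⟪matVec Aᵀ (matVec P xt), xt⟫ := (inner_matVec_transpose A (matVec P xt) xt).symm
        _ = ⟪xt, matVec Aᵀ (matVec P xt)⟫ := real_inner_comm _ _
    have e2 : ⟪xt, matVec P (matVec A xt)⟫ = ⟪xt, matVec (P * A) xt⟫ := by
      rw [matVec_mul]
    have e3 : ⟪matVec B et, matVec P xt⟫ = ⟪xt, w⟫ := by
      rw [hw, hsym xt]
      exact real_inner_comm _ _
    have e4 : ⟪xt, matVec (Aᵀ * P) xt⟫ + ⟪xt, matVec (P * A) xt⟫ = -⟪xt, matVec Q xt⟫ := by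
      rw [← inner_add_right, ← matVec_add_mat, hLyap, matVec_neg_mat, inner_neg_right]
    rw [hPv, hv, inner_add_right, inner_add_left, e1, e2, e3, ← hw]
    have e5 : ⟪xt, matVec P (matVec B et)⟫ = ⟪xt, w⟫ := by rw [hw]
    rw [e5]
    linarith [e4]
  -- ‖w‖² ≤ K ‖et‖²
  have hwPB : w = matVec (P * B) et := by rw [hw, matVec_mul]
  have hw2 : ‖w‖ ^ 2 ≤ K * ‖et‖ ^ 2 := by
    have h1 : ‖w‖ ^ 2 = ⟪matVec (Bᵀ * Pᵀ * P * B) et, et⟫ := by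
      rw [hwPB, norm_sq_matVec, hmm']
    rw [h1]
    calc ⟪matVec (Bᵀ * Pᵀ * P * B) et, et⟫ ≤ ‖matVec (Bᵀ * Pᵀ * P * B) et‖ * ‖et‖ :=
          real_inner_le_norm _ _
      _ ≤ opNorm (Bᵀ * Pᵀ * P * B) * ‖et‖ * ‖et‖ :=
          mul_le_mul_of_nonneg_right (norm_matVec_le _ _) (norm_nonneg _)
      _ = K * ‖et‖ ^ 2 := by rw [hK]; ring
  -- K > 0
  have hKpos : 0 < K := by
    rcases (norm_nonneg
      (LinearMap.toContinuousLinearMap (Matrix.toEuclideanLin (Bᵀ * Pᵀ * P * B)))).lt_or_eq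
      with h | h
    · exact h
    · exfalso
      have hKzero : K = 0 := by rw [hK, opNorm]; exact h.symm
      have hPB0 : ∀ u : EuclideanSpace ℝ (Fin m), matVec (P * B) u = 0 := by
        intro u
        have h1 : ‖matVec (Bᵀ * Pᵀ * P * B) u‖ ≤ 0 := by
          have h2 := norm_matVec_le (Bᵀ * Pᵀ * P * B) u
          rw [← hK, hKzero] at h2
          simpa using h2
        have h2 : matVec (Bᵀ * Pᵀ * P * B) u = 0 := norm_le_zero_iff.mp h1
        have h3 : ‖matVec (P * B) u‖ ^ 2 = 0 := by
          rw [norm_sq_matVec, hmm', h2, inner_zero_left]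
        exact norm_eq_zero.mp (pow_eq_zero_iff two_ne_zero |>.mp h3)
      have hPB : P * B = 0 := by
        apply Matrix.toEuclideanLin.injective
        rw [map_zero]
        exact LinearMap.ext fun u => hPB0 u
      apply hB
      have h5 := congrArg (fun X => P⁻¹ * X) hPB
      simpa [← Matrix.mul_assoc,
        Matrix.nonsing_inv_mul P (isUnit_iff_ne_zero.mpr hP.det_pos.ne')] using h5
  have hKne : K ≠ 0 := hKpos.ne'
  -- triggering consequence
  have hE : 4 * K * ‖et‖ ^ 2 ≤ σ * lamQ ^ 2 * ‖xt‖ ^ 2 := by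
    have h4K : (0:ℝ) < 4 * K := by linarith
    have h := mul_le_mul_of_nonneg_left htrig h4K.le
    calc 4 * K * ‖et‖ ^ 2 ≤ 4 * K * (σ * (lamQ ^ 2 / (4 * K)) * ‖xt‖ ^ 2) := h
      _ = σ * lamQ ^ 2 * ‖xt‖ ^ 2 := by field_simp
  have hQx : lamQ * ‖xt‖ ^ 2 ≤ ⟪xt, matVec Q xt⟫ := inner_matVec_ge hQ hlamQ xt
  have hCS : ⟪xt, w⟫ ≤ ‖xt‖ * ‖w‖ := real_inner_le_norm _ _
  have h4w : 4 * lamQ * (‖xt‖ * ‖w‖) ≤ (1 + σ) * lamQ ^ 2 * ‖xt‖ ^ 2 := by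
    nlinarith [sq_nonneg (lamQ * ‖xt‖ - 2 * ‖w‖)]
  have hfinal : 2 * ⟪xt, w⟫ ≤ (1 + σ) * (lamQ / 2) * ‖xt‖ ^ 2 := by
    have h1 : 2 * lamQ * (2 * ⟪xt, w⟫) ≤ 2 * lamQ * ((1 + σ) * (lamQ / 2) * ‖xt‖ ^ 2) := by
      calc 2 * lamQ * (2 * ⟪xt, w⟫) ≤ 4 * lamQ * (‖xt‖ * ‖w‖) := by nlinarith
        _ ≤ (1 + σ) * lamQ ^ 2 * ‖xt‖ ^ 2 := h4w
        _ = 2 * lamQ * ((1 + σ) * (lamQ / 2) * ‖xt‖ ^ 2) := by ring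
    exact le_of_mul_le_mul_left h1 (by positivity)
  constructor
  · rw [hD, hAlg]
    nlinarith [hQx, hfinal]
  · have h0 : 0 ≤ (1 - σ) * (lamQ / 2) * ‖xt‖ ^ 2 :=
      mul_nonneg (mul_nonneg (by linarith) (by linarith)) (sq_nonneg _)
    linarith
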